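/- Cross-difference identification of the local average controlled direct effect on a rectangle (Theorem 3.1, item 3, direct, d = 1): let 0 ≤ p₀ < p₀' ≤ 1 and 0 ≤ p₁ < p₁' ≤ 1 with ℙ(p₀ < V₀ ≤ p₀' and p₁ < V₁ ≤ p₁') > 0. Then ([G¹(p₀',p₁') − G¹(p₀',p₁)] − [G¹(p₀,p₁') − G¹(p₀,p₁)]) / ([C(p₀',p₁') − C(p₀',p₁)] − [C(p₀,p₁') − C(p₀,p₁)]) = 𝔼[ m(1,1,U) − m(0,1,U) | p₀ < V₀ ≤ p₀' and p₁ < V₁ ≤ p₁' ]. -/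

import Mathlib

open MeasureTheory ProbabilityTheory

/-- Cross-difference identification of the local average controlled direct effect on a
rectangle (Theorem 3.1, item 3, direct, d = 1). -/
theorem lacde_rectangle_identification
    {Ω 𝒰 : Type*} [MeasurableSpace Ω] [MeasurableSpace 𝒰]
    (μ : Measure Ω) [IsProbabilityMeasure μ]
    (U : Ω → 𝒰) (V₀ V₁ : Ω → ℝ)
    (hU : Measurable U) (hV₀ : Measurable V₀) (hV₁ : Measurable V₁)
    -- V₀, V₁ uniformly distributed on (0,1)
    (hV₀unif : Measure.map V₀ μ = volume.restrict (Set.Ioo (0:ℝ) 1))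
    (hV₁unif : Measure.map V₁ μ = volume.restrict (Set.Ioo (0:ℝ) 1))
    -- bounded measurable outcome function (`true` codes treatment 1, `false` codes 0)
    (m : Bool → Bool → 𝒰 → ℝ) (hm : ∀ d d', Measurable (m d d'))
    (hm_bdd : ∃ B, ∀ d d' u, |m d d' u| ≤ B)
    -- the copula of (V₀, V₁)
    (C : ℝ → ℝ → ℝ)
    (hC : ∀ p q, C p q = (μ {ω | V₀ ω ≤ p ∧ V₁ ω ≤ q}).toReal)
    -- identified conditional-mean function G¹
    (G1 : ℝ → ℝ → ℝ)
    (hG1 : ∀ p q, G1 p q =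
      (∫ ω, m true true (U ω) * (if V₀ ω ≤ p then (1:ℝ) else 0)
        * (if V₁ ω ≤ q then (1:ℝ) else 0) ∂μ)
      + ∫ ω, m false true (U ω) * (if p < V₀ ω then (1:ℝ) else 0)
        * (if V₁ ω ≤ q then (1:ℝ) else 0) ∂μ)
    -- the propensity-score values
    (p₀ p₀' p₁ p₁' : ℝ) (hp₀0 : 0 ≤ p₀) (hp₀lt : p₀ < p₀') (hp₀'1 : p₀' ≤ 1)
    (hp₁0 : 0 ≤ p₁) (hp₁lt : p₁ < p₁') (hp₁'1 : p₁' ≤ 1)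
    -- the conditioning subpopulation {p₀ < V₀ ≤ p₀', p₁ < V₁ ≤ p₁'} has positive probability
    (E : Set Ω)
    (hE : E = {ω | p₀ < V₀ ω ∧ V₀ ω ≤ p₀' ∧ p₁ < V₁ ω ∧ V₁ ω ≤ p₁'})
    (hEpos : 0 < μ E) :
    ((G1 p₀' p₁' - G1 p₀' p₁) - (G1 p₀ p₁' - G1 p₀ p₁))
      / ((C p₀' p₁' - C p₀' p₁) - (C p₀ p₁' - C p₀ p₁))
      = (∫ ω in E, (m true true (U ω) - m false true (U ω)) ∂μ) / (μ E).toReal := by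
  obtain ⟨B, hB⟩ := hm_bdd
  -- measurability of E
  have hEmeas : MeasurableSet E := by
    rw [hE]
    exact ((measurableSet_lt measurable_const hV₀).inter
      ((measurableSet_le hV₀ measurable_const).inter
        (((measurableSet_lt measurable_const hV₁).inter
          (measurableSet_le hV₁ measurable_const)))))
  -- indicator-type functions are measurable
  have hind : ∀ (V : Ω → ℝ), Measurable V → ∀ (p : ℝ),
      Measurable (fun ω => if V ω ≤ p then (1:ℝ) else 0) := by
    intro V hV p
    exact Measurable.ite (measurableSet_le hV measurable_const)
      measurable_const measurable_const
  have hind' : ∀ (V : Ω → ℝ), Measurable V → ∀ (p : ℝ),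
      Measurable (fun ω => if p < V ω then (1:ℝ) else 0) := by
    intro V hV p
    exact Measurable.ite (measurableSet_lt measurable_const hV)
      measurable_const measurable_const
  -- integrability of the basic pieces
  have hintf : ∀ (d d' : Bool) (g h : Ω → ℝ), Measurable g → Measurable h →
      (∀ ω, g ω = 0 ∨ g ω = 1) → (∀ ω, h ω = 0 ∨ h ω = 1) →
      Integrable (fun ω => m d d' (U ω) * g ω * h ω) μ := by
    intro d d' g h hg hh hg01 hh01
    apply Integrable.mono' (integrable_const B)
    · exact (((hm d d').comp hU).mul hg).mul hh |>.aestronglyMeasurable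
    · refine Filter.Eventually.of_forall fun ω => ?_
      have h1 := hB d d' (U ω)
      have h2 : |m d d' (U ω)| ≥ 0 := abs_nonneg _
      rcases hg01 ω with h3 | h3 <;> rcases hh01 ω with h4 | h4 <;>
        simp [Real.norm_eq_abs, h3, h4, abs_mul] <;> linarith
  have h01 : ∀ (V : Ω → ℝ) (p : ℝ) (ω : Ω),
      (if V ω ≤ p then (1:ℝ) else 0) = 0 ∨ (if V ω ≤ p then (1:ℝ) else 0) = 1 := by
    intro V p ω; split <;> simp
  have h01' : ∀ (V : Ω → ℝ) (p : ℝ) (ω : Ω),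
      (if p < V ω then (1:ℝ) else 0) = 0 ∨ (if p < V ω then (1:ℝ) else 0) = 1 := by
    intro V p ω; split <;> simp
  -- the combined integrand of G1 p q
  set F : ℝ → ℝ → Ω → ℝ := fun p q ω =>
    m true true (U ω) * (if V₀ ω ≤ p then (1:ℝ) else 0) * (if V₁ ω ≤ q then (1:ℝ) else 0)
    + m false true (U ω) * (if p < V₀ ω then (1:ℝ) else 0) * (if V₁ ω ≤ q then (1:ℝ) else 0)
    with hF
  have hFint : ∀ p q, Integrable (F p q) μ := fun p q =>
    (hintf true true _ _ (hind V₀ hV₀ p) (hind V₁ hV₁ q) (h01 V₀ p) (h01 V₁ q)).add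
      (hintf false true _ _ (hind' V₀ hV₀ p) (hind V₁ hV₁ q) (h01' V₀ p) (h01 V₁ q))
  have hG1F : ∀ p q, G1 p q = ∫ ω, F p q ω ∂μ := by
    intro p q
    rw [hG1 p q, hF]
    rw [integral_add
      (hintf true true _ _ (hind V₀ hV₀ p) (hind V₁ hV₁ q) (h01 V₀ p) (h01 V₁ q))
      (hintf false true _ _ (hind' V₀ hV₀ p) (hind V₁ hV₁ q) (h01' V₀ p) (h01 V₁ q))]
  -- numerator identity
  have hnum : (G1 p₀' p₁' - G1 p₀' p₁) - (G1 p₀ p₁' - G1 p₀ p₁)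
      = ∫ ω in E, (m true true (U ω) - m false true (U ω)) ∂μ := by
    rw [hG1F, hG1F, hG1F, hG1F, ← integral_sub (hFint p₀' p₁') (hFint p₀' p₁),
      ← integral_sub (hFint p₀ p₁') (hFint p₀ p₁),
      ← integral_sub (μ := μ) (f := fun a => F p₀' p₁' a - F p₀' p₁ a)
        (g := fun a => F p₀ p₁' a - F p₀ p₁ a)
        ((hFint p₀' p₁').sub (hFint p₀' p₁)) ((hFint p₀ p₁').sub (hFint p₀ p₁)),
      ← integral_indicator hEmeas]
    apply integral_congr_ae
    refine Filter.Eventually.of_forall fun ω => ?_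
    simp only [hF, hE, Set.indicator_apply, Set.mem_setOf_eq]
    by_cases h0 : V₀ ω ≤ p₀ <;> by_cases h0' : V₀ ω ≤ p₀' <;>
      by_cases h1 : V₁ ω ≤ p₁ <;> by_cases h1' : V₁ ω ≤ p₁'
    all_goals try exact absurd (h0.trans hp₀lt.le) h0'
    all_goals try exact absurd (h1.trans hp₁lt.le) h1'
    all_goals
      simp only [← not_le]
      simp [h0, h0', h1, h1']
      try ring
  -- denominator identity
  have hCint : ∀ p q, C p q = ∫ ω, (if V₀ ω ≤ p then (1:ℝ) else 0)
      * (if V₁ ω ≤ q then (1:ℝ) else 0) ∂μ := by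
    intro p q
    have hmeas : MeasurableSet {ω | V₀ ω ≤ p ∧ V₁ ω ≤ q} :=
      (measurableSet_le hV₀ measurable_const).inter (measurableSet_le hV₁ measurable_const)
    rw [hC p q, ← measureReal_def, ← integral_indicator_one hmeas]
    apply integral_congr_ae
    refine Filter.Eventually.of_forall fun ω => ?_
    simp only [Set.indicator_apply, Set.mem_setOf_eq, Pi.one_apply]
    by_cases h0 : V₀ ω ≤ p <;> by_cases h1 : V₁ ω ≤ q <;> simp [h0, h1]
  have hCintgr : ∀ p q, Integrable (fun ω => (if V₀ ω ≤ p then (1:ℝ) else 0)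
      * (if V₁ ω ≤ q then (1:ℝ) else 0)) μ := by
    intro p q
    apply Integrable.mono' (integrable_const 1)
    · exact ((hind V₀ hV₀ p).mul (hind V₁ hV₁ q)).aestronglyMeasurable
    · refine Filter.Eventually.of_forall fun ω => ?_
      rcases h01 V₀ p ω with h3 | h3 <;> rcases h01 V₁ q ω with h4 | h4 <;>
        simp [Real.norm_eq_abs, h3, h4]
  have hden : (C p₀' p₁' - C p₀' p₁) - (C p₀ p₁' - C p₀ p₁) = (μ E).toReal := by
    rw [hCint, hCint, hCint, hCint, ← integral_sub (hCintgr p₀' p₁') (hCintgr p₀' p₁),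
      ← integral_sub (hCintgr p₀ p₁') (hCintgr p₀ p₁),
      ← integral_sub (μ := μ)
        (f := fun a => ((if V₀ a ≤ p₀' then (1:ℝ) else 0) * if V₁ a ≤ p₁' then (1:ℝ) else 0)
            - (if V₀ a ≤ p₀' then (1:ℝ) else 0) * if V₁ a ≤ p₁ then (1:ℝ) else 0)
        (g := fun a => ((if V₀ a ≤ p₀ then (1:ℝ) else 0) * if V₁ a ≤ p₁' then (1:ℝ) else 0)
            - (if V₀ a ≤ p₀ then (1:ℝ) else 0) * if V₁ a ≤ p₁ then (1:ℝ) else 0)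
        ((hCintgr p₀' p₁').sub (hCintgr p₀' p₁)) ((hCintgr p₀ p₁').sub (hCintgr p₀ p₁)),
      ← measureReal_def, ← integral_indicator_one hEmeas]
    apply integral_congr_ae
    refine Filter.Eventually.of_forall fun ω => ?_
    simp only [hE, Set.indicator_apply, Set.mem_setOf_eq]
    by_cases h0 : V₀ ω ≤ p₀ <;> by_cases h0' : V₀ ω ≤ p₀' <;>
      by_cases h1 : V₁ ω ≤ p₁ <;> by_cases h1' : V₁ ω ≤ p₁'
    all_goals try exact absurd (h0.trans hp₀lt.le) h0'
    all_goals try exact absurd (h1.trans hp₁lt.le) h1'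
    all_goals
      simp only [← not_le]
      simp [h0, h0', h1, h1']
      try ring
  rw [hnum, hden]
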